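/- Consider the RLC iteration on a connected undirected graph: w^k = L_r x^k + E_l u^k + ∇f(x^k), x^{k+1} = argmin_{x∈X} α⟨w^k, x⟩ + B_ψ(x, x^k), u^{k+1} = u^k + α E_lᵀ x^{k+1}, with noiseless gradients. If 0 < α ≤ min{1/(β+λ), 1/γ}, then the energy V(x,u) = B_ψ(x*,x) + ½‖u−u*‖₂² is nonincreasing: V(x^{k+1}, u^{k+1}) ≤ V(x^k, u^k) − α(ℓ(x^{k+1}, u*) − ℓ(x*, u*)). -/

import Mathlib

open scoped RealInnerProductSpace
open Finset

noncomputable section RLCsetup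

/-- Node variables: one `ℝⁿ` vector per node, with the Euclidean (ℓ₂) product
structure. -/
abbrev NodeVec (V n : ℕ) := PiLp 2 fun _ : Fin V => EuclideanSpace ℝ (Fin n)

/-- Edge variables: one `ℝⁿ` vector per edge. -/
abbrev EdgeVec (m n : ℕ) := PiLp 2 fun _ : Fin m => EuclideanSpace ℝ (Fin n)

/-- Entries of the signed incidence matrix of the oriented graph. -/
def inc {V m : ℕ} (head tail : Fin m → Fin V) (i : Fin V) (e : Fin m) : ℝ :=
  if i = head e then 1 else if i = tail e then -1 else 0

/-- `E_l u = (E diag(√l) ⊗ Iₙ) u`. -/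
def Elmap {V m n : ℕ} (head tail : Fin m → Fin V) (l : Fin m → ℝ)
    (u : EdgeVec m n) : NodeVec V n :=
  WithLp.toLp 2 fun i => ∑ e, (inc head tail i e * Real.sqrt (l e)) • u e

/-- `E_lᵀ x = (diag(√l) Eᵀ ⊗ Iₙ) x`. -/
def EltMap {V m n : ℕ} (head tail : Fin m → Fin V) (l : Fin m → ℝ)
    (x : NodeVec V n) : EdgeVec m n :=
  WithLp.toLp 2 fun e => Real.sqrt (l e) • ∑ i, inc head tail i e • x i

/-- `L_r x = (E diag(r) Eᵀ ⊗ Iₙ) x`. -/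
def LrMap {V m n : ℕ} (head tail : Fin m → Fin V) (r : Fin m → ℝ)
    (x : NodeVec V n) : NodeVec V n :=
  WithLp.toLp 2 fun i => ∑ e, (inc head tail i e * r e) • ∑ j, inc head tail j e • x j

/-- Bregman divergence on node variables. -/
def bregman {V n : ℕ} (ψ : NodeVec V n → ℝ) (ψ' : NodeVec V n → NodeVec V n)
    (x' x : NodeVec V n) : ℝ :=
  ψ x' - ψ x - ⟪ψ' x, x' - x⟫

end RLCsetup

section Helpers

open scoped RealInnerProductSpace
open Finset Filter Topology

variable {E : Type*} [NormedAddCommGroup E] [InnerProductSpace ℝ E] [CompleteSpace E]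

/-- Slope bound: if along the segment the increments of `φ` are at most `t*c + t^2*C`,
then the directional derivative is at most `c`. -/
lemma slope_bound {φ : E → ℝ} {G x : E} (d : E) {c C : ℝ}
    (hφ : HasGradientAt φ G x)
    (h : ∀ t : ℝ, 0 < t → t ≤ 1 → φ (x + t • d) - φ x ≤ t * c + t ^ 2 * C) :
    ⟪G, d⟫ ≤ c := by
  have hline : HasDerivAt (fun t : ℝ => x + t • d) d 0 := by
    simpa using ((hasDerivAt_id (0:ℝ)).smul_const d).const_add x
  have hcomp : HasDerivAt (fun t : ℝ => φ (x + t • d)) (⟪G, d⟫) 0 := by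
    have hf : HasFDerivAt φ ((InnerProductSpace.toDual ℝ E) G) (x + (0:ℝ) • d) := by
      simpa using hφ.hasFDerivAt
    have h' := hf.comp_hasDerivAt 0 hline
    simp at h'
    exact h'
  have hslope : Tendsto (fun t : ℝ => (φ (x + t • d) - φ x) / t) (𝓝[>] 0) (𝓝 (⟪G, d⟫)) := by
    have h1 := hasDerivAt_iff_tendsto_slope.mp hcomp
    have h2 : Tendsto (slope (fun t : ℝ => φ (x + t • d)) 0) (𝓝[>] 0) (𝓝 (⟪G, d⟫)) :=
      h1.mono_left (nhdsWithin_mono 0 (by intro t ht; exact ne_of_gt ht))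
    refine h2.congr' ?_
    filter_upwards [self_mem_nhdsWithin] with t ht
    simp [slope, (Set.mem_Ioi.mp ht).ne', div_eq_inv_mul]
  have hlin : Tendsto (fun t : ℝ => c + t * C) (𝓝[>] 0) (𝓝 c) := by
    have : Tendsto (fun t : ℝ => c + t * C) (𝓝 0) (𝓝 (c + 0 * C)) := by
      exact (tendsto_id.mul_const C).const_add c
    simpa using this.mono_left nhdsWithin_le_nhds
  refine le_of_tendsto_of_tendsto hslope hlin ?_
  filter_upwards [Ioo_mem_nhdsGT_of_mem (by norm_num : (0:ℝ) ∈ Set.Ico 0 1)] with t ht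
  have h0 : 0 < t := ht.1
  calc (φ (x + t • d) - φ x) / t ≤ (t * c + t ^ 2 * C) / t :=
        div_le_div_of_nonneg_right (h t h0 ht.2.le) h0.le
    _ = c + t * C := by field_simp

/-- Gradient inequality for a `c`-strongly-convex (or `c`-weakly-convex) function on a
convex set: if `φ - (c/2)‖·‖²` is convex on `S`, then
`⟪∇φ(x), y - x⟫ ≤ φ y - φ x - (c/2)‖y-x‖²`. -/
lemma convex_grad_ineq {S : Set E} {φ : E → ℝ} {c : ℝ}
    (hconv : ConvexOn ℝ S (fun z => φ z - c / 2 * ‖z‖ ^ 2))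
    {x y G : E} (hx : x ∈ S) (hy : y ∈ S) (hG : HasGradientAt φ G x) :
    ⟪G, y - x⟫ ≤ φ y - φ x - c / 2 * ‖y - x‖ ^ 2 := by
  have key := slope_bound (φ := φ) (G := G) (x := x) (y - x)
    (c := φ y - φ x - c / 2 * ‖y - x‖ ^ 2) (C := c / 2 * ‖y - x‖ ^ 2) hG ?_
  · linarith [key]
  intro t ht0 ht1
  have hzt : x + t • (y - x) = (1 - t) • x + t • y := by
    module
  have CI := hconv.2 hx hy (by linarith : (0:ℝ) ≤ 1 - t) ht0.le (by ring)
  rw [← hzt] at CI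
  have e1 : ‖x + t • (y - x)‖ ^ 2
      = ‖x‖ ^ 2 + 2 * (t * ⟪x, y - x⟫) + t ^ 2 * ‖y - x‖ ^ 2 := by
    rw [norm_add_sq_real, real_inner_smul_right, norm_smul]
    rw [Real.norm_eq_abs, abs_of_pos ht0]
    ring
  have e2 : ‖y‖ ^ 2 = ‖x‖ ^ 2 + 2 * ⟪x, y - x⟫ + ‖y - x‖ ^ 2 := by
    have := norm_add_sq_real x (y - x)
    simpa using this
  simp only [smul_eq_mul] at CI
  rw [e1, e2] at CI
  ring_nf at CI ⊢
  linarith [CI]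

lemma hasGradientAt_inner_const (w x : E) : HasGradientAt (fun z => ⟪w, z⟫) w x := by
  refine hasGradientAt_iff_hasFDerivAt.mpr ?_
  exact (InnerProductSpace.toDual ℝ E w).hasFDerivAt (x := x)

lemma hasGradientAt_inner_add {ψ : E → ℝ} {gx : E} {x : E} (v : E)
    (hψ : HasGradientAt ψ gx x) :
    HasGradientAt (fun z => ⟪v, z⟫ + ψ z) (v + gx) x := by
  refine hasGradientAt_iff_hasFDerivAt.mpr ?_
  have := ((hasGradientAt_inner_const v x).hasFDerivAt).add hψ.hasFDerivAt
  rw [map_add]; exact this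

/-- First-order optimality condition for a minimizer over a convex set. -/
lemma min_grad_ineq {S : Set E} (hS : Convex ℝ S) {Φ : E → ℝ} {x G : E}
    (hx : x ∈ S) (hG : HasGradientAt Φ G x)
    (hmin : ∀ z ∈ S, Φ x ≤ Φ z) {y : E} (hy : y ∈ S) : 0 ≤ ⟪G, y - x⟫ := by
  have hneg : HasGradientAt (fun z => -Φ z) (-G) x := by
    refine hasGradientAt_iff_hasFDerivAt.mpr ?_
    rw [map_neg]; exact hG.hasFDerivAt.neg
  have key := slope_bound (φ := fun z => -Φ z) (G := -G) (x := x) (y - x)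
    (c := 0) (C := 0) hneg ?_
  · have : ⟪-G, y - x⟫ = -⟪G, y - x⟫ := by simp [inner_neg_left]
    linarith [key, this.symm.le]
  intro t ht0 ht1
  have hmem : x + t • (y - x) ∈ S := by
    have hzt : x + t • (y - x) = (1 - t) • x + t • y := by module
    rw [hzt]
    exact hS hx hy (by linarith) ht0.le (by ring)
  have := hmin _ hmem
  nlinarith [hmin _ hmem]

end Helpers

section MapLemmas

open Finset

variable {V m n : ℕ} (head tail : Fin m → Fin V)

/-- `Eᵀ x`, the unweighted edge differences. -/
noncomputable def Dt (x : NodeVec V n) (e : Fin m) : EuclideanSpace ℝ (Fin n) :=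
  ∑ i, inc head tail i e • x i

lemma Dt_sub (x y : NodeVec V n) (e : Fin m) :
    Dt head tail (x - y) e = Dt head tail x e - Dt head tail y e := by
  simp [Dt, smul_sub, Finset.sum_sub_distrib]

lemma inner_Elmap (l : Fin m → ℝ) (u : EdgeVec m n) (x : NodeVec V n) :
    ⟪Elmap head tail l u, x⟫ = ⟪u, EltMap head tail l x⟫ := by
  have h1 : ⟪Elmap head tail l u, x⟫ = ∑ i, ⟪Elmap head tail l u i, x i⟫ :=
    PiLp.inner_apply _ _
  have h2 : ⟪u, EltMap head tail l x⟫ = ∑ e, ⟪u e, EltMap head tail l x e⟫ :=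
    PiLp.inner_apply _ _
  rw [h1, h2]
  simp only [Elmap, EltMap, sum_inner, inner_sum,
    real_inner_smul_left, real_inner_smul_right, Finset.mul_sum]
  rw [Finset.sum_comm]
  exact Finset.sum_congr rfl fun e _ => Finset.sum_congr rfl fun i _ => by ring

lemma inner_LrMap (r : Fin m → ℝ) (x y : NodeVec V n) :
    ⟪LrMap head tail r x, y⟫ = ∑ e, r e * ⟪Dt head tail x e, Dt head tail y e⟫ := by
  have h1 : ⟪LrMap head tail r x, y⟫ = ∑ i, ⟪LrMap head tail r x i, y i⟫ :=
    PiLp.inner_apply _ _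
  rw [h1]
  simp only [LrMap, Dt, sum_inner, inner_sum,
    real_inner_smul_left, real_inner_smul_right, Finset.mul_sum]
  rw [Finset.sum_comm]
  exact Finset.sum_congr rfl fun e _ => Finset.sum_congr rfl fun i _ =>
    Finset.sum_congr rfl fun j _ => by ring

lemma norm_EltMap_sq (l : Fin m → ℝ) (hl : ∀ e, 0 ≤ l e) (x : NodeVec V n) :
    ‖EltMap head tail l x‖ ^ 2 = ∑ e, l e * ‖Dt head tail x e‖ ^ 2 := by
  rw [← real_inner_self_eq_norm_sq, PiLp.inner_apply]
  refine Finset.sum_congr rfl fun e _ => ?_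
  show ⟪Real.sqrt (l e) • Dt head tail x e, Real.sqrt (l e) • Dt head tail x e⟫ = _
  rw [real_inner_smul_left, real_inner_smul_right, real_inner_self_eq_norm_sq,
    ← mul_assoc, Real.mul_self_sqrt (hl e)]

/-- `L_r` as a linear map. -/
noncomputable def LrLin (r : Fin m → ℝ) : NodeVec V n →ₗ[ℝ] NodeVec V n where
  toFun := LrMap head tail r
  map_add' x y := by
    refine PiLp.ext fun i => ?_
    simp [LrMap, smul_add, Finset.sum_add_distrib, PiLp.add_apply]
  map_smul' a x := by
    refine PiLp.ext fun i => ?_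
    simp [LrMap, Finset.smul_sum, smul_comm a, PiLp.smul_apply]

lemma LrLin_symm (r : Fin m → ℝ) : (LrLin head tail (n := n) r).IsSymmetric := by
  intro x y
  show ⟪LrMap head tail r x, y⟫ = ⟪x, LrMap head tail r y⟫
  rw [inner_LrMap, real_inner_comm, inner_LrMap]
  exact Finset.sum_congr rfl fun e _ => by rw [real_inner_comm]

end MapLemmas

section Rayleigh

variable {E : Type*} [NormedAddCommGroup E] [InnerProductSpace ℝ E] [FiniteDimensional ℝ E]

/-- For a symmetric operator, any Rayleigh quotient is bounded by the largest eigenvalue. -/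
lemma inner_le_lam_of_symmetric {T : E →ₗ[ℝ] E} (hT : T.IsSymmetric) {lam : ℝ}
    (hlam : ∀ μ : ℝ, (∃ x : E, x ≠ 0 ∧ T x = μ • x) → μ ≤ lam) (d : E) :
    ⟪T d, d⟫ ≤ lam * ‖d‖ ^ 2 := by
  by_cases hd : d = 0
  · simp [hd]
  haveI : Nontrivial E := ⟨⟨d, 0, hd⟩⟩
  set s : ℝ := ⨆ x : { x : E // x ≠ 0 }, RCLike.re ⟪T x, x⟫ / ‖(x : E)‖ ^ 2 with hs
  have hE := hT.hasEigenvalue_iSup_of_finiteDimensional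
  obtain ⟨v, hv⟩ := hE.exists_hasEigenvector
  have hsle : s ≤ lam := hlam s ⟨v, hv.2, by
    have := hv.apply_eq_smul
    rw [hs]; simpa using this⟩
  have hbdd : BddAbove (Set.range fun x : { x : E // x ≠ 0 } =>
      RCLike.re ⟪T (x : E), (x : E)⟫ / ‖(x : E)‖ ^ 2) := by
    refine ⟨‖LinearMap.toContinuousLinearMap T‖, ?_⟩
    rintro _ ⟨x, rfl⟩
    have hx : (0:ℝ) < ‖(x : E)‖ ^ 2 := pow_pos (norm_pos_iff.mpr x.2) 2
    rw [div_le_iff₀ hx]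
    calc RCLike.re ⟪T (x : E), (x : E)⟫ = ⟪T (x : E), (x : E)⟫ := rfl
      _ ≤ ‖T (x : E)‖ * ‖(x : E)‖ := real_inner_le_norm _ _
      _ = ‖LinearMap.toContinuousLinearMap T (x : E)‖ * ‖(x : E)‖ := rfl
      _ ≤ (‖LinearMap.toContinuousLinearMap T‖ * ‖(x : E)‖) * ‖(x : E)‖ := by
          have := (LinearMap.toContinuousLinearMap T).le_opNorm (x : E)
          nlinarith [norm_nonneg (x : E)]
      _ = ‖LinearMap.toContinuousLinearMap T‖ * ‖(x : E)‖ ^ 2 := by ring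
  have hray : RCLike.re ⟪T d, d⟫ / ‖d‖ ^ 2 ≤ s := le_ciSup hbdd ⟨d, hd⟩
  have hd2 : (0:ℝ) < ‖d‖ ^ 2 := pow_pos (norm_pos_iff.mpr hd) 2
  have : ⟪T d, d⟫ / ‖d‖ ^ 2 ≤ lam := le_trans hray hsle
  calc ⟪T d, d⟫ = (⟪T d, d⟫ / ‖d‖ ^ 2) * ‖d‖ ^ 2 := by field_simp
    _ ≤ lam * ‖d‖ ^ 2 := mul_le_mul_of_nonneg_right this hd2.le

end Rayleigh

section Aggregate

open Finset

lemma sum_convexOn {V n : ℕ} {X₀ : Set (EuclideanSpace ℝ (Fin n))} (hX₀c : Convex ℝ X₀)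
    (φ : Fin V → EuclideanSpace ℝ (Fin n) → ℝ)
    (hφ : ∀ i, ConvexOn ℝ X₀ (φ i)) :
    ConvexOn ℝ {x : NodeVec V n | ∀ i, x i ∈ X₀} (fun x => ∑ i, φ i (x i)) := by
  refine ⟨fun x hx y hy a b ha hb hab i => hX₀c (hx i) (hy i) ha hb hab,
    fun x hx y hy a b ha hb hab => ?_⟩
  calc (∑ i, φ i ((a • x + b • y) i)) = ∑ i, φ i (a • x i + b • y i) := rfl
    _ ≤ ∑ i, (a * φ i (x i) + b * φ i (y i)) :=
        Finset.sum_le_sum fun i _ => by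
          simpa [smul_eq_mul] using (hφ i).2 (hx i) (hy i) ha hb hab
    _ = a • (∑ i, φ i (x i)) + b • (∑ i, φ i (y i)) := by
        simp [Finset.sum_add_distrib, Finset.mul_sum, smul_eq_mul]

lemma nodevec_norm_sq {V n : ℕ} (z : NodeVec V n) : ‖z‖ ^ 2 = ∑ i, ‖z i‖ ^ 2 := by
  rw [← real_inner_self_eq_norm_sq, PiLp.inner_apply]
  exact Finset.sum_congr rfl fun i _ => real_inner_self_eq_norm_sq _

end Aggregate


set_option maxHeartbeats 1000000 in
/-- One step of the (noiseless) RLC iteration does not increase the circuit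
energy `V(x,u) = B_ψ(x*,x) + ½‖u−u*‖²`, decreasing it by at least
`α (ℓ(x^{k+1},u*) − ℓ(x*,u*))` (Lemma 2 of the paper). -/
theorem rlc_energy_decrease (V m n : ℕ)
    (G : SimpleGraph (Fin V)) (hG : G.Connected)
    (head tail : Fin m → Fin V)
    (hadj : ∀ e, G.Adj (head e) (tail e))
    (hcover : ∀ i j, G.Adj i j →
      ∃ e, (head e = i ∧ tail e = j) ∨ (head e = j ∧ tail e = i))
    (l r : Fin m → ℝ) (hl : ∀ e, 0 < l e) (hr : ∀ e, 0 < r e)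
    (γ : ℝ) (hγpos : 0 < γ)
    (hγ : IsGreatest {a : ℝ | ∀ e, a * l e ≤ r e} (1 / γ))
    (lam : ℝ)
    (hlam : IsGreatest
      {μ : ℝ | ∃ x : NodeVec V n, x ≠ 0 ∧ LrMap head tail r x = μ • x} lam)
    -- the constraint set
    (X₀ : Set (EuclideanSpace ℝ (Fin n))) (hX₀c : Convex ℝ X₀)
    (hX₀cl : IsClosed X₀)
    -- the mirror map, a sum of 1-strongly convex node potentials
    (ψ₀ : EuclideanSpace ℝ (Fin n) → ℝ)
    (hψ₀ : ConvexOn ℝ X₀ (fun v => ψ₀ v - ‖v‖ ^ 2 / 2))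
    (ψ' : NodeVec V n → NodeVec V n)
    (hψ' : ∀ z ∈ {x : NodeVec V n | ∀ i, x i ∈ X₀},
      HasGradientAt (fun x : NodeVec V n => ∑ i, ψ₀ (x i)) (ψ' z) z)
    -- the objective, a sum of convex β-smooth node costs
    (β : ℝ) (hβ : 0 < β)
    (F : Fin V → EuclideanSpace ℝ (Fin n) → ℝ)
    (hFconv : ∀ i, ConvexOn ℝ X₀ (F i))
    (hFsmooth : ∀ i, ConvexOn ℝ X₀ (fun v => β / 2 * ‖v‖ ^ 2 - F i v))
    (g : NodeVec V n → NodeVec V n)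
    (hg : ∀ z ∈ {x : NodeVec V n | ∀ i, x i ∈ X₀},
      HasGradientAt (fun x : NodeVec V n => ∑ i, F i (x i)) (g z) z)
    -- the saddle point (x*, u*)
    (xstar : NodeVec V n) (ustar : EdgeVec m n)
    (hxstarX : ∀ i, xstar i ∈ X₀)
    (hprimal : EltMap head tail l xstar = 0)
    (hdual : ∀ z : NodeVec V n, (∀ i, z i ∈ X₀) →
      ⟪-(Elmap head tail l ustar) - g xstar, z - xstar⟫ ≤ 0)
    -- the step size
    (α : ℝ) (hα : 0 < α) (hαle : α ≤ min (1 / (β + lam)) (1 / γ))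
    -- one step of the RLC iteration with noiseless gradients
    (xk xk1 : NodeVec V n) (uk uk1 : EdgeVec m n)
    (hxkX : ∀ i, xk i ∈ X₀) (hxk1X : ∀ i, xk1 i ∈ X₀)
    (hxmin : ∀ z : NodeVec V n, (∀ i, z i ∈ X₀) →
      α * ⟪LrMap head tail r xk + Elmap head tail l uk + g xk, xk1⟫
          + bregman (fun x => ∑ i, ψ₀ (x i)) ψ' xk1 xk
        ≤ α * ⟪LrMap head tail r xk + Elmap head tail l uk + g xk, z⟫
          + bregman (fun x => ∑ i, ψ₀ (x i)) ψ' z xk)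
    (hu : uk1 = uk + α • EltMap head tail l xk1) :
    bregman (fun x => ∑ i, ψ₀ (x i)) ψ' xstar xk1 + ‖uk1 - ustar‖ ^ 2 / 2
      ≤ bregman (fun x => ∑ i, ψ₀ (x i)) ψ' xstar xk + ‖uk - ustar‖ ^ 2 / 2
        - α * (((∑ i, F i (xk1 i)) + ⟪Elmap head tail l ustar, xk1⟫)
          - ((∑ i, F i (xstar i)) + ⟪Elmap head tail l ustar, xstar⟫)) := by
  classical
  -- notation
  set X : Set (NodeVec V n) := {x : NodeVec V n | ∀ i, x i ∈ X₀} with hXdef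
  have hXconv : Convex ℝ X := fun x hx y hy a b ha hb hab i =>
    hX₀c (hx i) (hy i) ha hb hab
  have hxkX' : xk ∈ X := hxkX
  have hxk1X' : xk1 ∈ X := hxk1X
  have hxstarX' : xstar ∈ X := hxstarX
  -- aggregated convexity facts
  have hψconv : ConvexOn ℝ X (fun z => (∑ i, ψ₀ (z i)) - (1:ℝ) / 2 * ‖z‖ ^ 2) := by
    have h := sum_convexOn (V := V) hX₀c (fun _ v => ψ₀ v - ‖v‖ ^ 2 / 2) (fun i => hψ₀)
    have heq : (fun z : NodeVec V n => ∑ i, (ψ₀ (z i) - ‖z i‖ ^ 2 / 2))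
        = fun z => (∑ i, ψ₀ (z i)) - (1:ℝ) / 2 * ‖z‖ ^ 2 := by
      funext z
      rw [Finset.sum_sub_distrib, nodevec_norm_sq z, ← Finset.sum_div]
      ring
    rwa [heq] at h
  have hfconv : ConvexOn ℝ X (fun z => (∑ i, F i (z i)) - (0:ℝ) / 2 * ‖z‖ ^ 2) := by
    have h := sum_convexOn (V := V) hX₀c F hFconv
    have heq : (fun z : NodeVec V n => ∑ i, F i (z i))
        = fun z => (∑ i, F i (z i)) - (0:ℝ) / 2 * ‖z‖ ^ 2 := by
      funext z; ring
    rwa [heq] at h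
  have hfsm : ConvexOn ℝ X (fun z => (-(∑ i, F i (z i))) - (-β) / 2 * ‖z‖ ^ 2) := by
    have h := sum_convexOn (V := V) hX₀c (fun i v => β / 2 * ‖v‖ ^ 2 - F i v) hFsmooth
    have heq : (fun z : NodeVec V n => ∑ i, (β / 2 * ‖z i‖ ^ 2 - F i (z i)))
        = fun z => (-(∑ i, F i (z i))) - (-β) / 2 * ‖z‖ ^ 2 := by
      funext z
      rw [Finset.sum_sub_distrib, ← Finset.mul_sum, ← nodevec_norm_sq z]
      ring
    rwa [heq] at h
  -- gradient inequalities for f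
  have hfc : ⟪g xk, xstar - xk⟫ ≤ (∑ i, F i (xstar i)) - (∑ i, F i (xk i)) := by
    have h := convex_grad_ineq hfconv hxkX' hxstarX' (hg xk hxkX')
    simpa using h
  have hfs : -⟪g xk, xk1 - xk⟫ ≤ -(∑ i, F i (xk1 i)) + (∑ i, F i (xk i))
      + β / 2 * ‖xk1 - xk‖ ^ 2 := by
    have hneg : HasGradientAt (fun z : NodeVec V n => -(∑ i, F i (z i))) (-(g xk)) xk := by
      refine hasGradientAt_iff_hasFDerivAt.mpr ?_
      rw [map_neg]; exact (hg xk hxkX').hasFDerivAt.neg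
    have h := convex_grad_ineq hfsm hxkX' hxk1X' hneg
    rw [inner_neg_left] at h
    linarith [h]
  -- strong convexity of ψ: Bregman lower bound
  have hBp : 1 / 2 * ‖xk1 - xk‖ ^ 2 ≤ bregman (fun x => ∑ i, ψ₀ (x i)) ψ' xk1 xk := by
    have h := convex_grad_ineq hψconv hxkX' hxk1X' (hψ' xk hxkX')
    simp only [bregman]
    linarith [h]
  -- optimality of xk1
  have hopt : 0 ≤ α * ⟪LrMap head tail r xk + Elmap head tail l uk + g xk, xstar - xk1⟫
      + (⟪ψ' xk1, xstar - xk1⟫ - ⟪ψ' xk, xstar - xk1⟫) := by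
    have hform : ∀ z : NodeVec V n,
        α * ⟪LrMap head tail r xk + Elmap head tail l uk + g xk, z⟫
          + bregman (fun x => ∑ i, ψ₀ (x i)) ψ' z xk
        = (⟪α • (LrMap head tail r xk + Elmap head tail l uk + g xk) - ψ' xk, z⟫
            + ∑ i, ψ₀ (z i))
          + (⟪ψ' xk, xk⟫ - ∑ i, ψ₀ (xk i)) := by
      intro z
      simp only [bregman, inner_sub_left, inner_sub_right, real_inner_smul_left]
      ring
    have hmin : ∀ z ∈ X,
        (⟪α • (LrMap head tail r xk + Elmap head tail l uk + g xk) - ψ' xk, xk1⟫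
          + ∑ i, ψ₀ (xk1 i))
        ≤ (⟪α • (LrMap head tail r xk + Elmap head tail l uk + g xk) - ψ' xk, z⟫
          + ∑ i, ψ₀ (z i)) := by
      intro z hz
      have := hxmin z hz
      rw [hform xk1, hform z] at this
      linarith
    have hgrad : HasGradientAt
        (fun z : NodeVec V n =>
          ⟪α • (LrMap head tail r xk + Elmap head tail l uk + g xk) - ψ' xk, z⟫
            + ∑ i, ψ₀ (z i))
        ((α • (LrMap head tail r xk + Elmap head tail l uk + g xk) - ψ' xk) + ψ' xk1)
        xk1 := hasGradientAt_inner_add _ (hψ' xk1 hxk1X')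
    have h := min_grad_ineq hXconv hxk1X' hgrad hmin hxstarX'
    rw [inner_add_left, inner_sub_left, real_inner_smul_left] at h
    linarith [h]
  -- facts about xstar
  have hDtstar : ∀ e, Dt head tail xstar e = 0 := by
    intro e
    have h := congrArg (fun u : EdgeVec m n => u e) hprimal
    have h' : Real.sqrt (l e) • Dt head tail xstar e = 0 := h
    rcases smul_eq_zero.mp h' with h'' | h''
    · exact absurd h'' (ne_of_gt (Real.sqrt_pos.mpr (hl e)))
    · exact h''
  have hLrstar : ⟪LrMap head tail r xk, xstar⟫ = 0 := by
    rw [inner_LrMap]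
    refine Finset.sum_eq_zero fun e _ => ?_
    rw [hDtstar e, inner_zero_right, mul_zero]
  have hElstar : ∀ u : EdgeVec m n, ⟪Elmap head tail l u, xstar⟫ = 0 := by
    intro u
    rw [inner_Elmap, hprimal, inner_zero_right]
  -- decompose the inner product with w
  have hwd : ⟪LrMap head tail r xk + Elmap head tail l uk + g xk, xstar - xk1⟫
      = -⟪LrMap head tail r xk, xk1⟫ - ⟪Elmap head tail l uk, xk1⟫
        + (⟪g xk, xstar - xk⟫ - ⟪g xk, xk1 - xk⟫) := by
    rw [inner_add_left, inner_add_left, inner_sub_right, inner_sub_right, hLrstar,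
      hElstar uk]
    have : ⟪g xk, xstar - xk1⟫ = ⟪g xk, xstar - xk⟫ - ⟪g xk, xk1 - xk⟫ := by
      rw [← inner_sub_right]
      congr 1
      abel
    rw [inner_sub_right] at this ⊢
    linarith [this]
  rw [hwd] at hopt
  -- three point identity
  have h3 : bregman (fun x => ∑ i, ψ₀ (x i)) ψ' xstar xk
      - bregman (fun x => ∑ i, ψ₀ (x i)) ψ' xstar xk1
      - bregman (fun x => ∑ i, ψ₀ (x i)) ψ' xk1 xk
      = ⟪ψ' xk1, xstar - xk1⟫ - ⟪ψ' xk, xstar - xk1⟫ := by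
    simp only [bregman]
    rw [show (xstar - xk : NodeVec V n) = (xstar - xk1) + (xk1 - xk) from by abel,
      inner_add_right]
    ring
  -- dual update expansion
  have hadj1 : ⟪uk - ustar, EltMap head tail l xk1⟫
      = ⟪Elmap head tail l uk, xk1⟫ - ⟪Elmap head tail l ustar, xk1⟫ := by
    rw [inner_sub_left, ← inner_Elmap, ← inner_Elmap]
  have hU : ‖uk1 - ustar‖ ^ 2 = ‖uk - ustar‖ ^ 2
      + 2 * (α * (⟪Elmap head tail l uk, xk1⟫ - ⟪Elmap head tail l ustar, xk1⟫))
      + α ^ 2 * ‖EltMap head tail l xk1‖ ^ 2 := by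
    have hu' : uk1 - ustar = (uk - ustar) + α • EltMap head tail l xk1 := by
      rw [hu]; abel
    rw [hu', norm_add_sq_real, real_inner_smul_right, hadj1, norm_smul, mul_pow,
      Real.norm_eq_abs, sq_abs]
  -- Laplacian quadratic form facts
  have hq0 : ∀ z : NodeVec V n, 0 ≤ ⟪LrMap head tail r z, z⟫ := by
    intro z
    rw [inner_LrMap]
    refine Finset.sum_nonneg fun e _ => mul_nonneg (hr e).le real_inner_self_nonneg
  have hqΔ : ⟪LrMap head tail r (xk1 - xk), xk1 - xk⟫
      = ⟪LrMap head tail r xk1, xk1⟫ - 2 * ⟪LrMap head tail r xk, xk1⟫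
        + ⟪LrMap head tail r xk, xk⟫ := by
    have hsub : LrMap head tail r (xk1 - xk)
        = LrMap head tail r xk1 - LrMap head tail r xk :=
      map_sub (LrLin head tail (n := n) r) xk1 xk
    have hsymm : ⟪LrMap head tail r xk1, xk⟫ = ⟪LrMap head tail r xk, xk1⟫ := by
      have h : ⟪LrMap head tail r xk1, xk⟫ = ⟪xk1, LrMap head tail r xk⟫ :=
        LrLin_symm head tail r xk1 xk
      rw [h, real_inner_comm]
    rw [hsub, inner_sub_left, inner_sub_right, inner_sub_right, hsymm]
    ring
  have hA : -⟪LrMap head tail r xk, xk1⟫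
      ≤ (⟪LrMap head tail r (xk1 - xk), xk1 - xk⟫ - ⟪LrMap head tail r xk1, xk1⟫) / 2 := by
    linarith only [hqΔ, hq0 xk]
  have hqΔlam : ⟪LrMap head tail r (xk1 - xk), xk1 - xk⟫ ≤ lam * ‖xk1 - xk‖ ^ 2 :=
    inner_le_lam_of_symmetric (LrLin_symm head tail r) (fun μ hμ => hlam.2 hμ) (xk1 - xk)
  have hlam0 : 0 ≤ lam := by
    obtain ⟨x0, hx0ne, hx0eig⟩ := hlam.1
    have h1 : ⟪LrMap head tail r x0, x0⟫ = lam * ‖x0‖ ^ 2 := by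
      rw [hx0eig, real_inner_smul_left, real_inner_self_eq_norm_sq]
    have h3 : (0:ℝ) < ‖x0‖ ^ 2 := pow_pos (norm_pos_iff.mpr hx0ne) 2
    have h4 : 0 ≤ lam * ‖x0‖ ^ 2 := h1 ▸ hq0 x0
    exact le_of_mul_le_mul_right (by rw [zero_mul]; exact h4) h3
  have hN : ‖EltMap head tail l xk1‖ ^ 2 ≤ γ * ⟪LrMap head tail r xk1, xk1⟫ := by
    rw [norm_EltMap_sq head tail l (fun e => (hl e).le), inner_LrMap, Finset.mul_sum]
    refine Finset.sum_le_sum fun e _ => ?_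
    have hle : l e ≤ γ * r e := by
      have h := hγ.1 e
      calc l e = γ * (1 / γ * l e) := by field_simp
        _ ≤ γ * r e := by nlinarith [hγpos]
    calc l e * ‖Dt head tail xk1 e‖ ^ 2 ≤ (γ * r e) * ‖Dt head tail xk1 e‖ ^ 2 :=
          mul_le_mul_of_nonneg_right hle (by positivity)
      _ = γ * (r e * ⟪Dt head tail xk1 e, Dt head tail xk1 e⟫) := by
          rw [real_inner_self_eq_norm_sq]; ring
  -- step size facts
  have hβlam : (0:ℝ) < β + lam := by linarith
  have hα1 : α * (β + lam) ≤ 1 := by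
    have h := le_trans hαle (min_le_left _ _)
    rw [le_div_iff₀ hβlam] at h
    linarith
  have hα2 : α * γ ≤ 1 := by
    have h := le_trans hαle (min_le_right _ _)
    rw [le_div_iff₀ hγpos] at h
    linarith
  have hΔ0 : (0:ℝ) ≤ ‖xk1 - xk‖ ^ 2 := by positivity
  -- α-scaled inequalities
  have αhfc := mul_le_mul_of_nonneg_left hfc hα.le
  have αhfs := mul_le_mul_of_nonneg_left hfs hα.le
  have αhA := mul_le_mul_of_nonneg_left hA hα.le
  have αhqΔlam := mul_le_mul_of_nonneg_left hqΔlam hα.le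
  have hf5 := mul_le_mul_of_nonneg_right hα1 hΔ0
  have hf4 : α ^ 2 * ‖EltMap head tail l xk1‖ ^ 2 ≤ α * ⟪LrMap head tail r xk1, xk1⟫ := by
    have h1 := mul_le_mul_of_nonneg_left hN (sq_nonneg α)
    have h2 : α ^ 2 * (γ * ⟪LrMap head tail r xk1, xk1⟫)
        ≤ α * ⟪LrMap head tail r xk1, xk1⟫ := by
      nlinarith [mul_nonneg (mul_nonneg hα.le (hq0 xk1)) (sub_nonneg.mpr hα2)]
    linarith
  -- conclude
  rw [hElstar ustar]
  set A := ⟪LrMap head tail r xk, xk1⟫ with hsA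
  set qΔ := ⟪LrMap head tail r (xk1 - xk), xk1 - xk⟫ with hsqΔ
  set qp := ⟪LrMap head tail r xk1, xk1⟫ with hsqp
  set Ek := ⟪Elmap head tail l uk, xk1⟫ with hsEk
  set Es := ⟪Elmap head tail l ustar, xk1⟫ with hsEs
  set G1 := ⟪g xk, xstar - xk⟫ with hsG1
  set G2 := ⟪g xk, xk1 - xk⟫ with hsG2
  set P1 := ⟪ψ' xk1, xstar - xk1⟫ with hsP1
  set P0 := ⟪ψ' xk, xstar - xk1⟫ with hsP0
  set NN := ‖EltMap head tail l xk1‖ ^ 2 with hsNN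
  set nΔ := ‖xk1 - xk‖ ^ 2 with hsnΔ
  set U1 := ‖uk1 - ustar‖ ^ 2 with hsU1
  set U0 := ‖uk - ustar‖ ^ 2 with hsU0
  set fp := (∑ i, F i (xk1 i)) with hsfp
  set fs := (∑ i, F i (xstar i)) with hsfs
  set f0 := (∑ i, F i (xk i)) with hsf0
  set Bk1 := bregman (fun x => ∑ i, ψ₀ (x i)) ψ' xstar xk1 with hsBk1
  set Bk := bregman (fun x => ∑ i, ψ₀ (x i)) ψ' xstar xk with hsBk
  set Bp := bregman (fun x => ∑ i, ψ₀ (x i)) ψ' xk1 xk with hsBp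
  linarith only [hopt, h3, hU, hBp, αhfc, αhfs, αhA, αhqΔlam, hf5, hf4]
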